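/- Let X be a real Banach space and let 𝒞 be a compatible class of bounded subsets of X. Then X has the 𝒞-UMIP if and only if for every ε > 0 there exists δ > 0 such that for every C ∈ 𝒞 with C ⊆ B(X) and every f ∈ S(X*) there is x ∈ S(X) with S(B(X*), x, δ) ⊆ cone(B_C(f, ε)), where cone(A) = {λa : λ ≥ 0, a ∈ A}. -/

import Mathlib

open Metric Set Pointwise

variable {X : Type*} [NormedAddCommGroup X] [NormedSpace ℝ X]

/-- The seminorm `‖f‖_A = sup {|f x| : x ∈ A}` on the dual, for a bounded set `A ⊆ X`. -/
noncomputable def semiNormOn (A : Set X) (f : StrongDual ℝ X) : ℝ :=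
  sSup ((fun x => |f x|) '' A)

/-- `B_A(f, ε) = {g ∈ X* : ‖f − g‖_A < ε}`. -/
def ballOn (A : Set X) (f : StrongDual ℝ X) (ε : ℝ) : Set (StrongDual ℝ X) :=
  {g | semiNormOn A (f - g) < ε}

/-- `diam_A(B) = sup {‖f − g‖_A : f, g ∈ B}`. -/
noncomputable def diamOn (A : Set X) (B : Set (StrongDual ℝ X)) : ℝ :=
  sSup ((fun p : StrongDual ℝ X × StrongDual ℝ X =>
    semiNormOn A (p.1 - p.2)) '' (B ×ˢ B))

/-- The w*-slice `S(B(X*), x, δ) = {f ∈ B(X*) : f x > 1 − δ}`. -/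
def wslice (x : X) (δ : ℝ) : Set (StrongDual ℝ X) :=
  {f | ‖f‖ ≤ 1 ∧ 1 - δ < f x}

/-- `D(x) = {f ∈ S(X*) : f x = 1}`. -/
def dualD (x : X) : Set (StrongDual ℝ X) :=
  {f | ‖f‖ = 1 ∧ f x = 1}

/-- `D(E) = ⋃ {D(y) : y ∈ E}`. -/
def dualDSet (E : Set X) : Set (StrongDual ℝ X) :=
  ⋃ y ∈ E, dualD y

/-- `d1(C, x, δ) = sup {(‖x + λ y‖ + ‖x − λ y‖ − 2)/λ : 0 < λ < δ, y ∈ C}`. -/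
noncomputable def d1 (C : Set X) (x : X) (δ : ℝ) : ℝ :=
  sSup {t | ∃ l : ℝ, ∃ y ∈ C, 0 < l ∧ l < δ ∧ t = (‖x + l • y‖ + ‖x - l • y‖ - 2) / l}

/-- `d2(C, x, δ) = diam_C (S(B(X*), x, δ))`. -/
noncomputable def d2 (C : Set X) (x : X) (δ : ℝ) : ℝ :=
  diamOn C (wslice x δ)

/-- `d3(C, x, δ) = diam_C (D(S(X) ∩ B(x, δ)))`. -/
noncomputable def d3 (C : Set X) (x : X) (δ : ℝ) : ℝ :=
  diamOn C (dualDSet ({y | ‖y‖ = 1} ∩ ball x δ))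

/-- `M_{ε, δ, C}(X)`. -/
noncomputable def Mset (ε δ : ℝ) (C : Set X) : Set X :=
  {x | ‖x‖ = 1 ∧
    sSup {t | ∃ y ∈ C, 0 < ‖y‖ ∧ ‖y‖ < δ ∧ t = (‖x + y‖ + ‖x - y‖ - 2) / ‖y‖} < ε}

/-- `M_{ε, C}(X) = ⋃_{δ > 0} M_{ε, δ, C}(X)`. -/
noncomputable def MsetAll (ε : ℝ) (C : Set X) : Set X :=
  ⋃ δ > 0, Mset ε δ C

/-- A compatible class of bounded subsets of `X`. -/
structure IsCompatibleClass (𝒞 : Set (Set X)) : Prop where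
  bounded : ∀ C ∈ 𝒞, Bornology.IsBounded C
  smul_add_mem : ∀ C ∈ 𝒞, ∀ (a : ℝ) (x : X), (fun y => a • y + x) '' C ∈ 𝒞
  union_singleton_mem : ∀ C ∈ 𝒞, ∀ x : X, C ∪ {x} ∈ 𝒞
  closedAbsConvexHull_mem : ∀ C ∈ 𝒞, closure (absConvexHull ℝ C) ∈ 𝒞
  subset_mem : ∀ C ∈ 𝒞, ∀ A ⊆ C, A ∈ 𝒞
  union_mem : ∀ C₁ ∈ 𝒞, ∀ C₂ ∈ 𝒞, C₁ ∪ C₂ ∈ 𝒞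

/-- `f ∈ S(X*)` is a strong `𝒞`-semidenting point of `B(X*)`. -/
def IsStrongSemidenting (𝒞 : Set (Set X)) (f : StrongDual ℝ X) : Prop :=
  ∀ A ∈ 𝒞, ∀ ε : ℝ, 0 < ε → ∃ x : X, ‖x‖ = 1 ∧ ∃ δ : ℝ, 0 < δ ∧ δ < 1 ∧
    wslice x δ ⊆ ballOn A f ε

/-- A set is the intersection of the closed balls containing it. -/
def IsBallIntersection (D : Set X) : Prop :=
  D = ⋂₀ {B : Set X | (∃ z : X, ∃ r : ℝ, 0 < r ∧ B = closedBall z r) ∧ D ⊆ B}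

/-- `X` has the strong `𝒞`-MIP. -/
def HasStrongCMIP (𝒞 : Set (Set X)) : Prop :=
  ∀ C ∈ 𝒞, IsClosed C → Convex ℝ C → ∀ β : ℝ, 0 ≤ β →
    IsBallIntersection (closure (C + closedBall (0 : X) β))

/-- A support mapping: a selection of the duality map `D`. -/
def IsSupportMapping (φ : X → StrongDual ℝ X) : Prop :=
  ∀ x : X, ‖x‖ = 1 → φ x ∈ dualD x

/-- The duality map on `X` is norm-`τ` quasicontinuous. -/
def DualityMapQuasicontinuous (𝒞 : Set (Set X)) : Prop :=
  ∀ f : StrongDual ℝ X, ‖f‖ = 1 → ∀ ε : ℝ, 0 < ε → ∀ C ∈ 𝒞,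
    ∃ δ : ℝ, 0 < δ ∧ ∃ x : X, ‖x‖ = 1 ∧
      dualDSet ({y | ‖y‖ = 1} ∩ ball x δ) ⊆ ballOn C f ε

/-- `cone(A) = {λ a : λ ≥ 0, a ∈ A}`. -/
def coneOf (A : Set (StrongDual ℝ X)) : Set (StrongDual ℝ X) :=
  {g | ∃ l : ℝ, 0 ≤ l ∧ ∃ a ∈ A, g = l • a}

/-- `X` has the `𝒞`-UMIP. -/
def HasCUMIP (𝒞 : Set (Set X)) : Prop :=
  ∀ ε : ℝ, 0 < ε → ∀ M : ℝ, 2 ≤ M → ∃ K : ℝ, 0 < K ∧ ∃ η : ℝ, 0 < η ∧ η ≤ ε ∧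
    ∀ C ∈ 𝒞, IsClosed C → Convex ℝ C → Metric.diam C ≤ M → ε ≤ Metric.infDist 0 C →
      ∃ z₀ : X, ∃ r : ℝ, 0 < r ∧ r ≤ K ∧ C ⊆ closedBall z₀ r ∧
        η ≤ Metric.infDist 0 (closedBall z₀ r)

set_option linter.unusedSectionVars false
set_option maxHeartbeats 1000000

private lemma abs_le_semiNormOn {A : Set X} {b : ℝ} (hA : A ⊆ closedBall 0 b)
    (h : StrongDual ℝ X) {v : X} (hv : v ∈ A) : |h v| ≤ semiNormOn A h := by
  apply le_csSup
  · refine ⟨‖h‖ * b, ?_⟩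
    rintro s ⟨w, hw, rfl⟩
    have h1 : ‖w‖ ≤ b := mem_closedBall_zero_iff.1 (hA hw)
    calc |h w| = ‖h w‖ := (Real.norm_eq_abs _).symm
      _ ≤ ‖h‖ * ‖w‖ := h.le_opNorm w
      _ ≤ ‖h‖ * b := by gcongr
  · exact ⟨v, hv, rfl⟩

private lemma semiNormOn_le {A : Set X} {h : StrongDual ℝ X} {b : ℝ} (hb : 0 ≤ b)
    (H : ∀ v ∈ A, |h v| ≤ b) : semiNormOn A h ≤ b := by
  apply Real.sSup_le _ hb
  rintro s ⟨w, hw, rfl⟩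
  exact H w hw

private lemma norm_le_of_dual {y : X} {b : ℝ} (hb : 0 ≤ b)
    (H : ∀ g : StrongDual ℝ X, ‖g‖ ≤ 1 → g y ≤ b) : ‖y‖ ≤ b := by
  refine NormedSpace.norm_le_dual_bound ℝ y hb (fun f => ?_)
  rcases eq_or_ne f 0 with rfl | hf
  · simp
  · have hfpos : 0 < ‖f‖ := norm_pos_iff.2 hf
    have h1 : ‖(‖f‖⁻¹ • f : StrongDual ℝ X)‖ ≤ 1 := by
      rw [norm_smul, norm_inv, norm_norm, inv_mul_cancel₀ hfpos.ne']
    have h2 := H _ h1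
    have h3 := H (-(‖f‖⁻¹ • f)) (by rwa [norm_neg])
    have e2 : (‖f‖⁻¹ • f) y = ‖f‖⁻¹ * f y := rfl
    have e3 : (-(‖f‖⁻¹ • f)) y = -(‖f‖⁻¹ * f y) := by
      simp [e2]
    rw [e2] at h2; rw [e3] at h3
    have habs : |‖f‖⁻¹ * f y| ≤ b := abs_le.2 ⟨by linarith, h2⟩
    have hfy : f y = ‖f‖ * (‖f‖⁻¹ * f y) := by field_simp
    rw [Real.norm_eq_abs, hfy, abs_mul, abs_of_nonneg hfpos.le, mul_comm]
    exact mul_le_mul_of_nonneg_right habs hfpos.le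

private lemma exists_near_norming (f : StrongDual ℝ X) (hf : ‖f‖ = 1) {ν : ℝ} (hν : 0 < ν) :
    ∃ u : X, ‖u‖ ≤ 1 ∧ 1 - ν < f u := by
  by_contra hcon
  push_neg at hcon
  have h0 : (0 : ℝ) ≤ 1 - ν := by simpa using hcon 0 (by simp)
  have hb : ‖f‖ ≤ 1 - ν := by
    apply ContinuousLinearMap.opNorm_le_bound _ h0
    intro x
    rcases eq_or_ne x 0 with rfl | hx
    · simp
    · have hxpos : 0 < ‖x‖ := norm_pos_iff.2 hx
      have hx1 : ‖(‖x‖⁻¹ • x)‖ ≤ 1 := by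
        rw [norm_smul, norm_inv, norm_norm, inv_mul_cancel₀ hxpos.ne']
      have a1 := hcon _ hx1
      have a2 := hcon (-(‖x‖⁻¹ • x)) (by rwa [norm_neg])
      have e1 : f (‖x‖⁻¹ • x) = ‖x‖⁻¹ * f x := by rw [map_smul]; rfl
      have e2 : f (-(‖x‖⁻¹ • x)) = -(‖x‖⁻¹ * f x) := by rw [map_neg, e1]
      rw [e1] at a1; rw [e2] at a2
      have habs : |‖x‖⁻¹ * f x| ≤ 1 - ν := abs_le.2 ⟨by linarith, a1⟩
      have hfx : f x = ‖x‖ * (‖x‖⁻¹ * f x) := by field_simp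
      rw [Real.norm_eq_abs, hfx, abs_mul, abs_of_nonneg hxpos.le, mul_comm]
      exact mul_le_mul_of_nonneg_right habs hxpos.le
  rw [hf] at hb; linarith

private lemma le_infDist_of {s : Set X} (hs : s.Nonempty) {b : ℝ}
    (H : ∀ y ∈ s, b ≤ ‖y‖) : b ≤ Metric.infDist (0 : X) s := by
  by_contra h
  push_neg at h
  obtain ⟨y, hy, hlt⟩ := (Metric.infDist_lt_iff hs).1 h
  rw [dist_zero_left] at hlt
  exact absurd (H y hy) (by linarith)

private lemma balanced_cb (b : ℝ) : Balanced ℝ (closedBall (0 : X) b) := by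
  intro a ha
  rintro _ ⟨y, hy, rfl⟩
  rw [mem_closedBall_zero_iff] at hy ⊢
  rw [norm_smul]
  calc ‖a‖ * ‖y‖ ≤ 1 * b := by
        apply mul_le_mul ha hy (norm_nonneg _) zero_le_one
    _ = b := one_mul b

private lemma exists_separating {C : Set X} (hconv : Convex ℝ C)
    (hne : C.Nonempty) {ε : ℝ} (hε : 0 < ε) (hd : ε ≤ Metric.infDist 0 C) :
    ∃ f : StrongDual ℝ X, ‖f‖ = 1 ∧ ∀ c ∈ C, ε / 2 ≤ f c := by
  have hdisj : Disjoint (ball (0 : X) (ε / 2)) C := by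
    rw [Set.disjoint_left]
    intro v hv hvC
    rw [mem_ball, dist_zero_right] at hv
    have h1 : Metric.infDist (0 : X) C ≤ dist (0 : X) v := Metric.infDist_le_dist_of_mem hvC
    rw [dist_zero_left] at h1
    linarith
  obtain ⟨f, u, hfu, hfC⟩ :=
    geometric_hahn_banach_open (convex_ball (0 : X) (ε / 2)) isOpen_ball hconv hdisj
  have hu0 : 0 < u := by
    have := hfu 0 (by simp [mem_ball]; positivity)
    simpa using this
  have claim : ∀ x : X, f x ≤ 2 * u / ε * ‖x‖ := by
    intro x
    by_contra hgt
    push_neg at hgt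
    have hfx : 0 < f x := lt_of_le_of_lt (by positivity) hgt
    set s : ℝ := ε / (2 * u) * f x with hs
    have hspos : 0 < s := by positivity
    have hxs : ‖x‖ < s := by
      rw [hs]
      rw [div_mul_eq_mul_div, lt_div_iff₀ (by positivity)]
      calc ‖x‖ * (2 * u) = 2 * u / ε * ‖x‖ * ε := by field_simp
        _ < f x * ε := by
            apply mul_lt_mul_of_pos_right hgt hε
        _ = ε * f x := by ring
    set y : X := (ε / (2 * s)) • x with hy
    have hymem : y ∈ ball (0 : X) (ε / 2) := by
      rw [mem_ball, dist_zero_right, hy, norm_smul, Real.norm_eq_abs,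
        abs_of_pos (by positivity : (0:ℝ) < ε / (2 * s))]
      rw [div_mul_eq_mul_div, div_lt_iff₀ (by positivity)]
      calc ε * ‖x‖ < ε * s := by exact mul_lt_mul_of_pos_left hxs hε
        _ = ε / 2 * (2 * s) := by ring
    have hyval : f y = u := by
      rw [hy, map_smul, smul_eq_mul, hs]
      field_simp
    have := hfu y hymem
    rw [hyval] at this
    exact lt_irrefl u this
  have hfnezero : f ≠ 0 := by
    intro h
    obtain ⟨c, hc⟩ := hne
    have := hfC c hc
    rw [h] at this
    simp at this
    linarith
  have hfpos : 0 < ‖f‖ := by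
    rcases eq_or_ne ‖f‖ 0 with h | h
    · exact absurd (norm_eq_zero.1 h) hfnezero
    · exact lt_of_le_of_ne (norm_nonneg f) (Ne.symm h)
  have hfb : ‖f‖ ≤ 2 * u / ε := by
    apply ContinuousLinearMap.opNorm_le_bound _ (by positivity)
    intro x
    rw [Real.norm_eq_abs, abs_le]
    constructor
    · have := claim (-x)
      rw [map_neg] at this
      rw [norm_neg] at this
      linarith
    · exact claim x
  refine ⟨‖f‖⁻¹ • f, ?_, ?_⟩
  · rw [norm_smul, norm_inv, norm_norm, inv_mul_cancel₀ hfpos.ne']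
  · intro c hc
    have h1 : u ≤ f c := hfC c hc
    have h2 : (‖f‖⁻¹ • f) c = ‖f‖⁻¹ * f c := rfl
    rw [h2]
    have key : ε / 2 * ‖f‖ ≤ u := by
      calc ε / 2 * ‖f‖ ≤ ε / 2 * (2 * u / ε) := by
            apply mul_le_mul_of_nonneg_left hfb (by positivity)
        _ = u := by field_simp
    have : ε / 2 * ‖f‖ ≤ f c := le_trans key h1
    calc ε / 2 = ‖f‖⁻¹ * (ε / 2 * ‖f‖) := by field_simp
      _ ≤ ‖f‖⁻¹ * f c := by
          apply mul_le_mul_of_nonneg_left this (by positivity)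


private lemma hull_norm_le {s : Set X} {b : ℝ}
    (H : ∀ y ∈ s, ‖y‖ ≤ b) : ∀ y ∈ closure (absConvexHull ℝ s), ‖y‖ ≤ b := by
  intro y hy
  have hsub : s ⊆ closedBall (0 : X) b := fun z hz => mem_closedBall_zero_iff.2 (H z hz)
  have : closure (absConvexHull ℝ s) ⊆ closedBall (0 : X) b :=
    closure_minimal (absConvexHull_min hsub ⟨balanced_cb b, convex_closedBall _ _⟩) isClosed_closedBall
  exact mem_closedBall_zero_iff.1 (this hy)

private lemma hull_absf_le {s : Set X} (f : StrongDual ℝ X) {b : ℝ} (hb : 0 ≤ b)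
    (H : ∀ y ∈ s, |f y| ≤ b) : ∀ y ∈ closure (absConvexHull ℝ s), |f y| ≤ b := by
  have hTbal : Balanced ℝ {z : X | |f z| ≤ b} := by
    intro a ha
    rintro _ ⟨z, hz, rfl⟩
    show |f (a • z)| ≤ b
    rw [map_smul, smul_eq_mul, abs_mul]
    calc |a| * |f z| ≤ 1 * b :=
          mul_le_mul (by rwa [Real.norm_eq_abs] at ha) hz (abs_nonneg _) zero_le_one
      _ = b := one_mul b
  have hTconv : Convex ℝ {z : X | |f z| ≤ b} := by
    intro z1 h1 z2 h2 a c ha hc hac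
    show |f (a • z1 + c • z2)| ≤ b
    rw [map_add, map_smul, map_smul, smul_eq_mul, smul_eq_mul]
    calc |a * f z1 + c * f z2| ≤ |a * f z1| + |c * f z2| := abs_add_le _ _
      _ = a * |f z1| + c * |f z2| := by
          rw [abs_mul, abs_mul, abs_of_nonneg ha, abs_of_nonneg hc]
      _ ≤ a * b + c * b := by
          apply add_le_add (mul_le_mul_of_nonneg_left h1 ha) (mul_le_mul_of_nonneg_left h2 hc)
      _ = b := by rw [← add_mul, hac, one_mul]
  have hTclosed : IsClosed {z : X | |f z| ≤ b} := by
    have he : {z : X | |f z| ≤ b} = (fun z => |f z|) ⁻¹' Set.Iic b := rfl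
    rw [he]
    exact IsClosed.preimage (continuous_abs.comp f.continuous) isClosed_Iic
  intro y hy
  exact closure_minimal (absConvexHull_min H ⟨hTbal, hTconv⟩) hTclosed hy
private lemma dir_mp [CompleteSpace X] (𝒞 : Set (Set X)) (h𝒞 : IsCompatibleClass 𝒞)
    (H : HasCUMIP 𝒞) :
    ∀ ε : ℝ, 0 < ε → ∃ δ : ℝ, 0 < δ ∧ ∀ C ∈ 𝒞, C ⊆ closedBall (0 : X) 1 →
      ∀ f : StrongDual ℝ X, ‖f‖ = 1 →
        ∃ x : X, ‖x‖ = 1 ∧ wslice x δ ⊆ coneOf (ballOn C f ε) := by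
  intro ε hε
  obtain ⟨K, hK, η, hη, hη2, HU⟩ := H (1/2) (by norm_num) (2 + 32/ε) (by nlinarith [div_pos (show (0:ℝ)<32 by norm_num) hε])
  refine ⟨η / (2*(K+1)), by positivity, ?_⟩
  set δ : ℝ := η / (2*(K+1)) with hδdef
  have hδpos : 0 < δ := by positivity
  intro C hC hCb f hf
  have hfne : f ≠ 0 := by intro h; rw [h] at hf; simp at hf
  set ρ : ℝ := semiNormOn C f with hρdef
  have hρle : ∀ c ∈ C, |f c| ≤ ρ := fun c hc => abs_le_semiNormOn hCb f hc
  by_cases hcase : ρ ≤ ε/2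
  · -- trivial case
    obtain ⟨y₀, hy₀⟩ : ∃ y, f y ≠ 0 := by
      by_contra h; push_neg at h
      exact hfne (by ext v; simp [h v])
    have hy0 : y₀ ≠ 0 := fun h => hy₀ (by simp [h])
    have hy0n : 0 < ‖y₀‖ := norm_pos_iff.2 hy0
    refine ⟨‖y₀‖⁻¹ • y₀, by
      rw [norm_smul, norm_inv, norm_norm, inv_mul_cancel₀ hy0n.ne'], ?_⟩
    rintro g ⟨hg1, _⟩
    refine ⟨4/ε, by positivity, (4/ε)⁻¹ • g, ?_, (smul_inv_smul₀ (by positivity) g).symm⟩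
    show semiNormOn C (f - (4/ε)⁻¹ • g) < ε
    refine lt_of_le_of_lt (semiNormOn_le (b := 3*ε/4) (by positivity) ?_) (by linarith)
    intro v hv
    have h1 : |f v| ≤ ρ := hρle v hv
    have h2 : |g v| ≤ 1 := by
      have := g.le_opNorm v
      have hv1 : ‖v‖ ≤ 1 := mem_closedBall_zero_iff.1 (hCb hv)
      rw [Real.norm_eq_abs] at this
      nlinarith [norm_nonneg g, abs_nonneg (g v)]
    have h4 : (4/ε)⁻¹ = ε/4 := by field_simp
    have he : (f - (4/ε)⁻¹ • g) v = f v - ε/4 * g v := by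
      rw [show (f - (4/ε)⁻¹ • g) v = f v - (4/ε)⁻¹ * g v from rfl, h4]
    rw [he]
    have h3 : |ε/4 * g v| ≤ ε/4 := by
      rw [abs_mul, abs_of_nonneg (by positivity : (0:ℝ) ≤ ε/4)]
      nlinarith [abs_nonneg (g v), (by positivity : (0:ℝ) < ε/4)]
    calc |f v - ε/4 * g v| ≤ |f v| + |ε/4 * g v| := abs_sub _ _
      _ ≤ ε/2 + ε/4 := by linarith
      _ = 3*ε/4 := by ring
  · push_neg at hcase
    -- main case : ε/2 < ρ
    have hρ1 : ρ ≤ 1 := by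
      apply semiNormOn_le (by norm_num)
      intro v hv
      have h1 := f.le_opNorm v
      have hv1 : ‖v‖ ≤ 1 := mem_closedBall_zero_iff.1 (hCb hv)
      rw [Real.norm_eq_abs, hf, one_mul] at h1
      linarith
    have hε2 : ε < 2 := by linarith
    have hρpos : 0 < ρ := by linarith
    have hCne : C.Nonempty := by
      rcases C.eq_empty_or_nonempty with h | h
      · exfalso
        have he : semiNormOn (∅ : Set X) f = 0 := by
          simp [semiNormOn, Real.sSup_empty]
        rw [hρdef, h, he] at hρpos
        exact lt_irrefl 0 hρpos
      · exact h
    obtain ⟨u, hu1, hu2⟩ := exists_near_norming f hf (show (0:ℝ) < ε/32 by positivity)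
    have hfu1 : f u ≤ 1 := by
      have h1 := f.le_opNorm u
      rw [Real.norm_eq_abs, hf, one_mul] at h1
      linarith [le_abs_self (f u)]
    obtain ⟨sval, ⟨v, hvC, rfl⟩, hvgt⟩ :=
      exists_lt_of_lt_csSup (hCne.image _)
        (show ρ/2 < sSup ((fun x => |f x|) '' C) by
          rw [show sSup ((fun x => |f x|) '' C) = semiNormOn C f from rfl, ← hρdef]; linarith)
    have hvgt' : ρ/2 < |f v| := by simpa using hvgt
    set A := closure (absConvexHull ℝ C) with hA
    have hAmem : A ∈ 𝒞 := h𝒞.closedAbsConvexHull_mem C hC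
    have hCA : C ⊆ A := subset_trans subset_absConvexHull subset_closure
    have hAbal : Balanced ℝ A := absConvex_absConvexHull.1.closure
    have hAconv : Convex ℝ A := absConvex_absConvexHull.2.closure
    have hAb : ∀ y ∈ A, ‖y‖ ≤ 1 :=
      hull_norm_le (fun y hy => mem_closedBall_zero_iff.1 (hCb hy))
    have hAf : ∀ y ∈ A, |f y| ≤ ρ := hull_absf_le f hρpos.le hρle
    obtain ⟨w, hwA, hw2⟩ : ∃ w ∈ A, ρ/2 < f w := by
      rcases le_or_gt 0 (f v) with h | h
      · exact ⟨v, hCA hvC, by rwa [abs_of_nonneg h] at hvgt'⟩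
      · refine ⟨-v, ?_, ?_⟩
        · have h2 := hAbal (-1 : ℝ) (by norm_num) (Set.smul_mem_smul_set (hCA hvC))
          simpa using h2
        · rw [map_neg]; rwa [abs_of_neg h] at hvgt'
    have hw3 : f w ≤ ρ := le_trans (le_abs_self _) (hAf w hwA)
    have hw4 : ‖w‖ ≤ 1 := hAb w hwA
    have hfwpos : 0 < f w := by linarith
    -- A₀
    set A3 := (fun z : X => (3:ℝ) • z + 0) '' A with hA3
    have hA3mem : A3 ∈ 𝒞 := h𝒞.smul_add_mem A hAmem 3 0
    set A₀ := A3 ∩ {z : X | f z = 0} with hA₀def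
    have hA₀mem : A₀ ∈ 𝒞 := h𝒞.subset_mem A3 hA3mem A₀ inter_subset_left
    have hA₀norm : ∀ y ∈ A₀, ‖y‖ ≤ 3 := by
      rintro y ⟨⟨z, hz, rfl⟩, -⟩
      simp only [add_zero, norm_smul, Real.norm_eq_abs]
      calc |(3:ℝ)| * ‖z‖ ≤ 3 * 1 := by
            apply mul_le_mul (by norm_num) (hAb z hz) (norm_nonneg z) (by norm_num)
        _ = 3 := by norm_num
    have hA₀f : ∀ y ∈ A₀, f y = 0 := fun y hy => hy.2
    have hdecomp : ∀ c ∈ C, c - (f c / f w) • w ∈ A₀ := by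
      intro c hc
      have hcoef : |f c / f w| ≤ 2 := by
        rw [abs_div, abs_of_pos hfwpos, div_le_iff₀ hfwpos]
        have h1 := hρle c hc
        linarith
      have hqA : ((-(f c / f w) / 2) • w : X) ∈ A := by
        have h1 : ‖(-(f c / f w) / 2 : ℝ)‖ ≤ 1 := by
          rw [Real.norm_eq_abs, abs_div, abs_neg]
          rw [div_le_one (by norm_num : (0:ℝ) < |(2:ℝ)|)]
          calc |f c / f w| ≤ 2 := hcoef
            _ = |(2:ℝ)| := by norm_num
        exact hAbal _ h1 (Set.smul_mem_smul_set hwA)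
      have hm : (1/3 : ℝ) • c + (2/3 : ℝ) • ((-(f c / f w) / 2) • w) ∈ A :=
        hAconv (hCA hc) hqA (by norm_num) (by norm_num) (by norm_num)
      constructor
      · refine ⟨(1/3 : ℝ) • c + (2/3 : ℝ) • ((-(f c / f w) / 2) • w), hm, ?_⟩
        module
      · show f (c - (f c / f w) • w) = 0
        rw [map_sub, map_smul, smul_eq_mul]
        field_simp
        ring
    -- the sets S, E, D
    set p : X := (8/ε) • (w - f w • u) with hp
    set S : Set X := ((fun z : X => (4/ε) • z + 0) '' A₀) ∪ {p} with hS
    have hSmem : S ∈ 𝒞 := h𝒞.union_singleton_mem _ (h𝒞.smul_add_mem A₀ hA₀mem (4/ε) 0) p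
    set E := closure (absConvexHull ℝ S) with hE
    have hEmem : E ∈ 𝒞 := h𝒞.closedAbsConvexHull_mem S hSmem
    have hEbal : Balanced ℝ E := absConvex_absConvexHull.1.closure
    have hEconv : Convex ℝ E := absConvex_absConvexHull.2.closure
    have hSE : S ⊆ E := subset_trans subset_absConvexHull subset_closure
    have hpnorm : ‖p‖ ≤ 16/ε := by
      rw [hp, norm_smul, Real.norm_eq_abs, abs_of_pos (by positivity : (0:ℝ) < 8/ε)]
      have h2 : ‖w - f w • u‖ ≤ 2 := by
        calc ‖w - f w • u‖ ≤ ‖w‖ + ‖f w • u‖ := norm_sub_le _ _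
          _ ≤ 1 + 1 := by
              apply add_le_add hw4
              rw [norm_smul, Real.norm_eq_abs, abs_of_pos hfwpos]
              calc f w * ‖u‖ ≤ 1 * 1 :=
                    mul_le_mul (by linarith) hu1 (norm_nonneg u) (by norm_num)
                _ = 1 := one_mul 1
          _ = 2 := by norm_num
      calc (8/ε) * ‖w - f w • u‖ ≤ (8/ε) * 2 := mul_le_mul_of_nonneg_left h2 (by positivity)
        _ = 16/ε := by ring
    have hEnorm : ∀ e ∈ E, ‖e‖ ≤ 16/ε := by
      apply hull_norm_le
      rintro y (⟨z, hz, rfl⟩ | hy)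
      · simp only [add_zero, norm_smul, Real.norm_eq_abs]
        rw [abs_of_pos (by positivity : (0:ℝ) < 4/ε)]
        calc (4/ε) * ‖z‖ ≤ (4/ε) * 3 := mul_le_mul_of_nonneg_left (hA₀norm z hz) (by positivity)
          _ = 12/ε := by ring
          _ ≤ 16/ε := by gcongr <;> norm_num
      · rw [mem_singleton_iff] at hy; rw [hy]; exact hpnorm
    have hEf : ∀ e ∈ E, |f e| ≤ 1/4 := by
      apply hull_absf_le f (by norm_num)
      rintro y (⟨z, hz, rfl⟩ | hy)
      · simp only [add_zero, map_smul, smul_eq_mul, hA₀f z hz, mul_zero, abs_zero]; norm_num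
      · rw [mem_singleton_iff] at hy; rw [hy]
        rw [hp, map_smul, smul_eq_mul, map_sub, map_smul, smul_eq_mul]
        rw [abs_mul, abs_of_pos (by positivity : (0:ℝ) < 8/ε)]
        have h1 : |f w - f w * f u| ≤ ε/32 := by
          rw [show f w - f w * f u = f w * (1 - f u) by ring, abs_mul]
          rw [abs_of_pos hfwpos, abs_of_nonneg (by linarith : (0:ℝ) ≤ 1 - f u)]
          calc f w * (1 - f u) ≤ 1 * (ε/32) := by
                apply mul_le_mul (by linarith) (by linarith) (by linarith) (by norm_num)
            _ = ε/32 := one_mul _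
        calc (8/ε) * |f w - f w * f u| ≤ (8/ε) * (ε/32) :=
              mul_le_mul_of_nonneg_left h1 (by positivity)
          _ = 1/4 := by field_simp; ring
    have hpS : p ∈ S := Set.mem_union_right _ rfl
    have hE0 : (0:X) ∈ E := by
      apply subset_closure
      have h1 := absConvex_absConvexHull.1 (0:ℝ) (by norm_num)
        (Set.smul_mem_smul_set (subset_absConvexHull hpS))
      simpa using h1
    set D := (fun z : X => (1:ℝ) • z + u) '' E with hD
    have hDmem : D ∈ 𝒞 := h𝒞.smul_add_mem E hEmem 1 u
    have hDeq : D = (fun z : X => z + u) '' E := by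
      rw [hD]; apply Set.image_congr; intro z _; rw [one_smul]
    have hDclosed : IsClosed D := by
      rw [hDeq]
      exact (Homeomorph.addRight u).isClosedMap E isClosed_closure
    have hDconv : Convex ℝ D := by
      rw [hDeq, show (fun z : X => z + u) = (fun z : X => u + z) from funext fun z => add_comm z u]
      exact hEconv.translate u
    have hmemD : ∀ e ∈ E, e + u ∈ D := by
      intro e he
      rw [hDeq]; exact ⟨e, he, rfl⟩
    have huD : u ∈ D := by have h1 := hmemD 0 hE0; simpa using h1
    have hDf : ∀ d ∈ D, 1/2 ≤ f d := by
      intro d hd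
      rw [hDeq] at hd
      obtain ⟨e, he, rfl⟩ := hd
      rw [map_add]
      have h1 := abs_le.1 (hEf e he)
      linarith [h1.1]
    have hDdiam : Metric.diam D ≤ 2 + 32/ε := by
      apply Metric.diam_le_of_forall_dist_le (by positivity)
      intro d1 hd1 d2 hd2
      rw [hDeq] at hd1 hd2
      obtain ⟨e1, he1, rfl⟩ := hd1
      obtain ⟨e2, he2, rfl⟩ := hd2
      have h32 : (0:ℝ) < 32/ε := by positivity
      calc dist (e1 + u) (e2 + u) = dist e1 e2 := dist_add_right e1 e2 u
        _ ≤ ‖e1‖ + ‖e2‖ := by rw [dist_eq_norm]; exact norm_sub_le _ _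
        _ ≤ 16/ε + 16/ε := add_le_add (hEnorm e1 he1) (hEnorm e2 he2)
        _ = 32/ε := by ring
        _ ≤ 2 + 32/ε := by linarith
    have hdz : ∀ y : X, dist (0:X) y = ‖y‖ := fun y => by rw [dist_comm, dist_zero_right]
    have hDdist : 1/2 ≤ Metric.infDist (0:X) D := by
      apply le_infDist_of ⟨u, huD⟩
      intro y hy
      have h1 := hDf y hy
      have h2 := f.le_opNorm y
      rw [Real.norm_eq_abs, hf, one_mul] at h2
      linarith [le_abs_self (f y)]
    obtain ⟨z₀, r, hr0, hrK, hsub, hdist⟩ := HU D hDmem hDclosed hDconv hDdiam hDdist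
    have hz0n : η ≤ ‖z₀‖ := by
      have h1 : Metric.infDist (0:X) (closedBall z₀ r) ≤ dist (0:X) z₀ :=
        Metric.infDist_le_dist_of_mem (mem_closedBall_self hr0.le)
      rw [hdz] at h1
      linarith
    have hz0pos : 0 < ‖z₀‖ := lt_of_lt_of_le hη hz0n
    have hzr : r + η ≤ ‖z₀‖ := by
      by_cases hle : ‖z₀‖ ≤ r
      · exfalso
        have h0mem : (0:X) ∈ closedBall z₀ r := by
          rw [mem_closedBall, hdz]; exact hle
        have h1 : Metric.infDist (0:X) (closedBall z₀ r) ≤ dist (0:X) (0:X) :=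
          Metric.infDist_le_dist_of_mem h0mem
        rw [dist_self] at h1
        linarith
      · push_neg at hle
        have hrq : r / ‖z₀‖ < 1 := by rw [div_lt_one hz0pos]; exact hle
        have hymem : (1 - r/‖z₀‖) • z₀ ∈ closedBall z₀ r := by
          rw [mem_closedBall, dist_eq_norm]
          have he : (1 - r/‖z₀‖) • z₀ - z₀ = (-(r/‖z₀‖)) • z₀ := by module
          rw [he, norm_smul, Real.norm_eq_abs, abs_neg,
            abs_of_nonneg (by positivity : (0:ℝ) ≤ r/‖z₀‖), div_mul_cancel₀ _ hz0pos.ne']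
        have h2 : Metric.infDist (0:X) (closedBall z₀ r) ≤ dist (0:X) ((1 - r/‖z₀‖) • z₀) :=
          Metric.infDist_le_dist_of_mem hymem
        rw [hdz, norm_smul, Real.norm_eq_abs,
          abs_of_pos (by linarith : (0:ℝ) < 1 - r/‖z₀‖)] at h2
        have h3 : (1 - r/‖z₀‖) * ‖z₀‖ = ‖z₀‖ - r := by field_simp
        rw [h3] at h2
        linarith
    set x := ‖z₀‖⁻¹ • z₀ with hx
    have hxn : ‖x‖ = 1 := by rw [hx, norm_smul, norm_inv, norm_norm, inv_mul_cancel₀ hz0pos.ne']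
    refine ⟨x, hxn, ?_⟩
    rintro g ⟨hg1, hg2⟩
    have hgz : ‖z₀‖ * (1 - δ) < g z₀ := by
      have hzx : z₀ = ‖z₀‖ • x := by rw [hx, smul_inv_smul₀ hz0pos.ne']
      calc ‖z₀‖ * (1 - δ) < ‖z₀‖ * g x := by exact mul_lt_mul_of_pos_left hg2 hz0pos
        _ = g z₀ := by conv_rhs => rw [hzx, map_smul, smul_eq_mul]
    have hδ4 : δ * (K + 1) = η/2 := by rw [hδdef]; field_simp
    have hδle : δ ≤ 1/4 := by
      rw [hδdef, div_le_iff₀ (by positivity : (0:ℝ) < 2*(K+1))]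
      nlinarith
    have hkey : ∀ d ∈ D, η/2 ≤ g d := by
      intro d hd
      have h1 : ‖z₀ - d‖ ≤ r := by
        have h2 := hsub hd
        rw [mem_closedBall, dist_eq_norm] at h2
        rw [norm_sub_rev]; exact h2
      have h2 : g (z₀ - d) ≤ r := by
        have h3 := g.le_opNorm (z₀ - d)
        rw [Real.norm_eq_abs] at h3
        nlinarith [le_abs_self (g (z₀ - d)), norm_nonneg (z₀ - d), abs_nonneg (g (z₀ - d))]
      have h3 : g d = g z₀ - g (z₀ - d) := by rw [map_sub]; ring
      nlinarith [mul_nonneg (sub_nonneg.2 hzr) (by linarith : (0:ℝ) ≤ 1 - δ), hδ4, hrK, hη]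
    have hgu : η/2 ≤ g u := hkey u huD
    have hgupos : 0 < g u := by linarith
    have hA₀g : ∀ y ∈ A₀, |g y| ≤ g u * (ε/4) := by
      intro y hy
      have he1 : ((4/ε) • y : X) ∈ E := hSE (Set.mem_union_left _ ⟨y, hy, add_zero _⟩)
      have he2 : (-((4/ε) • y) : X) ∈ E := by
        have h1 := hEbal (-1 : ℝ) (by norm_num) (Set.smul_mem_smul_set he1)
        simpa using h1
      have k1 := hkey _ (hmemD _ he1)
      have k2 := hkey _ (hmemD _ he2)
      rw [map_add, map_smul, smul_eq_mul] at k1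
      rw [map_add, map_neg, map_smul, smul_eq_mul] at k2
      have habs : (4/ε) * |g y| ≤ g u := by
        rcases abs_cases (g y) with ⟨hc, -⟩ | ⟨hc, -⟩ <;> rw [hc] <;> nlinarith
      have heq : |g y| = (ε/4) * ((4/ε) * |g y|) := by field_simp
      rw [heq]
      calc (ε/4) * ((4/ε) * |g y|) ≤ (ε/4) * g u :=
            mul_le_mul_of_nonneg_left habs (by positivity)
        _ = g u * (ε/4) := by ring
    have hpg : |g w - f w * g u| ≤ g u * (ε/8) := by
      have he1 : p ∈ E := hSE hpS
      have he2 : (-p : X) ∈ E := by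
        have h1 := hEbal (-1 : ℝ) (by norm_num) (Set.smul_mem_smul_set he1)
        simpa using h1
      have k1 := hkey _ (hmemD _ he1)
      have k2 := hkey _ (hmemD _ he2)
      have hgp : g p = (8/ε) * (g w - f w * g u) := by
        rw [hp, map_smul, smul_eq_mul, map_sub, map_smul, smul_eq_mul]
      rw [map_add, hgp] at k1
      rw [map_add, map_neg, hgp] at k2
      have habs : (8/ε) * |g w - f w * g u| ≤ g u := by
        rcases abs_cases (g w - f w * g u) with ⟨hc, -⟩ | ⟨hc, -⟩ <;> rw [hc] <;> nlinarith
      have heq : |g w - f w * g u| = (ε/8) * ((8/ε) * |g w - f w * g u|) := by field_simp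
      rw [heq]
      calc (ε/8) * ((8/ε) * |g w - f w * g u|) ≤ (ε/8) * g u :=
            mul_le_mul_of_nonneg_left habs (by positivity)
        _ = g u * (ε/8) := by ring
    have hfw4 : ε/4 < f w := by linarith
    have hgw : g u * (f w / 2) ≤ g w := by
      have h1 := (abs_le.1 hpg).1
      have h2 : 0 ≤ g u * (f w/2 - ε/8) := mul_nonneg hgupos.le (by linarith)
      have h3 : f w * g u - g u * (ε/8) - g u * (f w/2) = g u * (f w/2 - ε/8) := by ring
      linarith
    have hgwpos : 0 < g w :=
      lt_of_lt_of_le (mul_pos hgupos (by linarith : (0:ℝ) < f w/2)) hgw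
    obtain ⟨l, hl⟩ : ∃ l : ℝ, l = g w / f w := ⟨_, rfl⟩
    have hlpos : 0 < l := by rw [hl]; exact div_pos hgwpos hfwpos
    have hl2 : g u / 2 ≤ l := by
      rw [hl, le_div_iff₀ hfwpos]
      have h3 : g u / 2 * f w = g u * (f w / 2) := by ring
      linarith
    refine ⟨l, hlpos.le, l⁻¹ • g, ?_, (smul_inv_smul₀ hlpos.ne' g).symm⟩
    show semiNormOn C (f - l⁻¹ • g) < ε
    refine lt_of_le_of_lt (semiNormOn_le (b := ε/2) (by positivity) ?_) (by linarith)
    intro c hc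
    have hv₀ := hA₀g _ (hdecomp c hc)
    rw [map_sub, map_smul, smul_eq_mul] at hv₀
    have key2 : |l * f c - g c| ≤ g u * (ε/4) := by
      have he : l * f c - g c = -(g c - f c / f w * g w) := by
        rw [hl]; ring
      rw [he, abs_neg]; exact hv₀
    have hlne : (l:ℝ) ≠ 0 := hlpos.ne'
    have hval : (f - l⁻¹ • g) c = l⁻¹ * (l * f c - g c) := by
      have h0 : (f - l⁻¹ • g) c = f c - l⁻¹ * g c := by
        simp [ContinuousLinearMap.sub_apply, ContinuousLinearMap.smul_apply, smul_eq_mul]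
      rw [h0]
      field_simp
    rw [hval, abs_mul, abs_of_pos (by positivity : (0:ℝ) < l⁻¹)]
    calc l⁻¹ * |l * f c - g c| ≤ l⁻¹ * (g u * (ε/4)) :=
          mul_le_mul_of_nonneg_left key2 (by positivity)
      _ ≤ l⁻¹ * (l * (ε/2)) := by
          apply mul_le_mul_of_nonneg_left _ (by positivity)
          have h5 : g u * (ε/4) ≤ 2*l*(ε/4) :=
            mul_le_mul_of_nonneg_right (by linarith) (by positivity)
          have h6 : 2*l*(ε/4) = l * (ε/2) := by ring
          linarith
      _ = ε/2 := by field_simp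

private lemma dir_mpr [CompleteSpace X] (𝒞 : Set (Set X)) (h𝒞 : IsCompatibleClass 𝒞)
    (H : ∀ ε : ℝ, 0 < ε → ∃ δ : ℝ, 0 < δ ∧ ∀ C ∈ 𝒞, C ⊆ closedBall (0 : X) 1 →
      ∀ f : StrongDual ℝ X, ‖f‖ = 1 →
        ∃ x : X, ‖x‖ = 1 ∧ wslice x δ ⊆ coneOf (ballOn C f ε)) :
    HasCUMIP 𝒞 := by
  intro ε hε M hM
  obtain ⟨R, hRdef⟩ : ∃ v : ℝ, v = 2*M + ε + 2 := ⟨_, rfl⟩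
  have hR : 0 < R := by rw [hRdef]; positivity
  have hRne : R ≠ 0 := hR.ne'
  have hRge : ε ≤ R := by rw [hRdef]; nlinarith
  obtain ⟨εt, hεt⟩ : ∃ v : ℝ, v = min (ε/(8*R)) (1/4) := ⟨_, rfl⟩
  have hεtpos : 0 < εt := by rw [hεt]; exact lt_min (by positivity) (by norm_num)
  have hεt4 : εt ≤ 1/4 := by rw [hεt]; exact min_le_right _ _
  have hεt8 : εt ≤ ε/(8*R) := by rw [hεt]; exact min_le_left _ _
  obtain ⟨δ₀, hδ₀, Hδ⟩ := H εt hεtpos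
  obtain ⟨δ, hδdef⟩ : ∃ v : ℝ, v = min δ₀ (1/2) := ⟨_, rfl⟩
  have hδpos : 0 < δ := by rw [hδdef]; exact lt_min hδ₀ (by norm_num)
  have hδd : δ ≤ δ₀ := by rw [hδdef]; exact min_le_left _ _
  have hδh : δ ≤ 1/2 := by rw [hδdef]; exact min_le_right _ _
  obtain ⟨t, htdef⟩ : ∃ v : ℝ, v = 3*(R+ε)/δ + 1 := ⟨_, rfl⟩
  have htpos : 0 < t := by rw [htdef]; positivity
  obtain ⟨η, hηdef⟩ : ∃ v : ℝ, v = 3*δ*ε/40 := ⟨_, rfl⟩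
  have hηpos : 0 < η := by rw [hηdef]; positivity
  have hηε : η ≤ ε := by
    rw [hηdef]
    nlinarith [mul_le_mul_of_nonneg_right hδh hε.le]
  have htδ : 3*(R+ε) ≤ t * δ := by
    rw [htdef]
    have h1 : (3*(R+ε)/δ) * δ = 3*(R+ε) := div_mul_cancel₀ _ hδpos.ne'
    nlinarith
  have htη : η < t := by
    have h1 : t * δ ≤ t * (1/2) := mul_le_mul_of_nonneg_left hδh htpos.le
    linarith
  refine ⟨max t M, lt_of_lt_of_le htpos (le_max_left _ _), η, hηpos, hηε, ?_⟩
  intro C hC hCcl hCconv hCdiam hCdist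
  have hCne : C.Nonempty := by
    rcases C.eq_empty_or_nonempty with h | h
    · exfalso; rw [h, Metric.infDist_empty] at hCdist; linarith
    · exact h
  have hdz : ∀ y : X, dist (0:X) y = ‖y‖ := fun y => by rw [dist_comm, dist_zero_right]
  by_cases hfar : M + ε + 1 ≤ Metric.infDist (0:X) C
  · -- far case
    obtain ⟨c₀, hc₀⟩ := hCne
    refine ⟨c₀, M, by linarith, le_max_right _ _, ?_, ?_⟩
    · intro d hd
      rw [mem_closedBall]
      exact le_trans (Metric.dist_le_diam_of_mem (h𝒞.bounded C hC) hd hc₀) hCdiam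
    · apply le_infDist_of ⟨c₀, mem_closedBall_self (by linarith)⟩
      intro y hy
      rw [mem_closedBall] at hy
      have h1 : Metric.infDist (0:X) C ≤ ‖c₀‖ := by
        have h2 : Metric.infDist (0:X) C ≤ dist (0:X) c₀ := Metric.infDist_le_dist_of_mem hc₀
        rwa [hdz] at h2
      have h2 : ‖c₀‖ - ‖y‖ ≤ M := by
        calc ‖c₀‖ - ‖y‖ ≤ ‖c₀ - y‖ := by linarith [abs_le.1 (abs_norm_sub_norm_le c₀ y)]
          _ = dist y c₀ := by rw [dist_comm, dist_eq_norm]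
          _ ≤ M := hy
      linarith
  · push_neg at hfar
    obtain ⟨c₀, hc₀C, hc₀⟩ := (Metric.infDist_lt_iff hCne).1
      (show Metric.infDist (0:X) C < M + ε + 2 by linarith)
    rw [hdz] at hc₀
    have hbound : ∀ c ∈ C, ‖c‖ ≤ R := by
      intro c hcC
      have h1 : dist c c₀ ≤ M :=
        le_trans (Metric.dist_le_diam_of_mem (h𝒞.bounded C hC) hcC hc₀C) hCdiam
      have h2 : ‖c‖ - ‖c₀‖ ≤ ‖c - c₀‖ := by linarith [abs_le.1 (abs_norm_sub_norm_le c c₀)]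
      rw [← dist_eq_norm] at h2
      rw [hRdef]; linarith
    obtain ⟨f, hf1, hfC⟩ := exists_separating hCconv hCne hε hCdist
    obtain ⟨u, hu1, hu2⟩ := exists_near_norming f hf1 hεtpos
    have hfu1 : f u ≤ 1 := by
      have h1 := f.le_opNorm u
      rw [Real.norm_eq_abs, hf1, one_mul] at h1
      linarith [le_abs_self (f u)]
    set C₁ : Set X := ((fun y : X => (1/R) • y + 0) '' C) ∪ {u} with hC₁def
    have hC₁mem : C₁ ∈ 𝒞 := h𝒞.union_singleton_mem _ (h𝒞.smul_add_mem C hC (1/R) 0) u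
    have hC₁sub : C₁ ⊆ closedBall (0:X) 1 := by
      rintro y (⟨c, hcC, rfl⟩ | hy)
      · simp only [add_zero]
        rw [mem_closedBall_zero_iff, norm_smul, Real.norm_eq_abs,
          abs_of_pos (by positivity : (0:ℝ) < 1/R)]
        calc (1/R) * ‖c‖ ≤ (1/R) * R := mul_le_mul_of_nonneg_left (hbound c hcC) (by positivity)
          _ = 1 := by field_simp
      · rw [mem_singleton_iff] at hy; rw [hy]; exact mem_closedBall_zero_iff.2 hu1
    obtain ⟨x, hx1, hslice⟩ := Hδ C₁ hC₁mem hC₁sub f hf1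
    have huC₁ : u ∈ C₁ := Set.mem_union_right _ rfl
    have hball : ∀ a : StrongDual ℝ X, a ∈ ballOn C₁ f εt →
        ∀ v ∈ C₁, |f v - a v| < εt := by
      intro a ha v hv
      have h1 : |(f - a) v| ≤ semiNormOn C₁ (f - a) := abs_le_semiNormOn hC₁sub (f - a) hv
      have h2 : (f - a) v = f v - a v := rfl
      rw [h2] at h1
      exact lt_of_le_of_lt h1 ha
    have hLemA : ∀ g : StrongDual ℝ X, ‖g‖ ≤ 1 → 1 - δ/3 < g x → δ/4 ≤ g u := by
      intro g hg1 hg2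
      have hβpos : 0 < δ/3 := by positivity
      set β : ℝ := δ/3 with hβ
      have hfx1 : f x ≤ 1 := by
        have h1 := f.le_opNorm x
        rw [Real.norm_eq_abs, hf1, one_mul, hx1] at h1
        linarith [le_abs_self (f x)]
      have hh2norm : ‖(1+β)⁻¹ • (g - β • f)‖ ≤ 1 := by
        rw [norm_smul, Real.norm_eq_abs, abs_of_pos (by positivity : (0:ℝ) < (1+β)⁻¹)]
        have h1 : ‖g - β • f‖ ≤ 1 + β := by
          calc ‖g - β • f‖ ≤ ‖g‖ + ‖β • f‖ := norm_sub_le _ _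
            _ ≤ 1 + β := by
                apply add_le_add hg1
                rw [norm_smul, Real.norm_eq_abs, abs_of_pos hβpos, hf1, mul_one]
        calc (1+β)⁻¹ * ‖g - β • f‖ ≤ (1+β)⁻¹ * (1+β) :=
              mul_le_mul_of_nonneg_left h1 (by positivity)
          _ = 1 := inv_mul_cancel₀ (by positivity)
      have hh2x : 1 - δ₀ < ((1+β)⁻¹ • (g - β • f)) x := by
        have he : ((1+β)⁻¹ • (g - β • f)) x = (1+β)⁻¹ * (g x - β * f x) := rfl
        rw [he]
        have h1 : 1 - 2*β < g x - β * f x := by nlinarith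
        have h2 : (1 - δ₀) * (1 + β) ≤ 1 - 2*β := by nlinarith [mul_pos hδ₀ hβpos]
        calc 1 - δ₀ = ((1 - δ₀) * (1 + β)) * (1+β)⁻¹ := by field_simp
          _ ≤ (1 - 2*β) * (1+β)⁻¹ := mul_le_mul_of_nonneg_right h2 (by positivity)
          _ < (1+β)⁻¹ * (g x - β * f x) := by
              rw [mul_comm]
              exact mul_lt_mul_of_pos_left h1 (by positivity)
      obtain ⟨μ, hμ0, a, ha, heq⟩ := hslice ⟨hh2norm, hh2x⟩
      have hau : f u - εt < a u := by
        have h1 := (abs_lt.1 (hball a ha u huC₁)).2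
        linarith
      have hgueq : g u = β * f u + (1+β) * (μ * a u) := by
        have h1 : (1+β) • ((1+β)⁻¹ • (g - β • f)) = g - β • f := by
          rw [smul_smul, mul_inv_cancel₀ (by positivity : (1+β:ℝ) ≠ 0), one_smul]
        have h2 : g - β • f = (1+β) • (μ • a) := by rw [← heq, h1]
        have h3 : g u - β * f u = (1+β) * (μ * a u) := by
          calc g u - β * f u = (g - β • f) u := rfl
            _ = ((1+β) • (μ • a)) u := by rw [h2]
            _ = (1+β) * (μ * a u) := rfl
        linarith
      have haupos : 0 ≤ μ * a u := mul_nonneg hμ0 (by nlinarith)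
      rw [hgueq]
      nlinarith [mul_nonneg (by positivity : (0:ℝ) ≤ 1+β) haupos]
    have hincl : ∀ d ∈ C, ‖t • x - d‖ ≤ t - η := by
      intro d hd
      apply norm_le_of_dual (by linarith)
      intro g hg1
      have hgd : |g d| ≤ R := by
        have h1 := g.le_opNorm d
        rw [Real.norm_eq_abs] at h1
        nlinarith [hbound d hd, norm_nonneg d, abs_nonneg (g d)]
      have hge : g (t • x - d) = t * g x - g d := by
        rw [map_sub, map_smul, smul_eq_mul]
      by_cases hgx : g x ≤ 1 - δ/3
      · rw [hge]
        have h2 : t * g x ≤ t * (1 - δ/3) := mul_le_mul_of_nonneg_left hgx htpos.le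
        have h3 : t * (1 - δ/3) = t - t*δ/3 := by ring
        have h4 : R + ε ≤ t*δ/3 := by linarith
        linarith [(abs_le.1 hgd).1]
      · push_neg at hgx
        have hgslice : g ∈ wslice x δ₀ := ⟨hg1, by nlinarith⟩
        obtain ⟨l, hl0, a, ha, heq⟩ := hslice hgslice
        have hgu : δ/4 ≤ g u := hLemA g hg1 hgx
        have hau : a u ≤ 1 + εt := by
          have h1 := (abs_lt.1 (hball a ha u huC₁)).1
          linarith
        have hgueq : g u = l * a u := by rw [heq]; rfl
        have hl5 : δ/5 ≤ l := by
          have h1 : l * a u ≤ l * (5/4) := mul_le_mul_of_nonneg_left (by linarith) hl0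
          nlinarith
        have hd'C₁ : ((1/R) • d + 0 : X) ∈ C₁ := Set.mem_union_left _ ⟨d, hd, rfl⟩
        have hfd' : f ((1/R) • d + 0) = (1/R) * f d := by
          rw [add_zero, map_smul, smul_eq_mul]
        have had' : 3*ε/(8*R) ≤ a ((1/R) • d + 0) := by
          have h1 := (abs_lt.1 (hball a ha _ hd'C₁)).2
          have h2 : ε/(2*R) ≤ f ((1/R) • d + 0) := by
            rw [hfd']
            have h3 := hfC d hd
            calc ε/(2*R) = (1/R) * (ε/2) := by ring
              _ ≤ (1/R) * f d := mul_le_mul_of_nonneg_left h3 (by positivity)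
          have h5 : ε/(2*R) - ε/(8*R) = 3*ε/(8*R) := by ring
          linarith
        have hgd2 : η ≤ g d := by
          have h1 : d = R • ((1/R) • d + 0) := by
            rw [add_zero, smul_smul]
            rw [mul_one_div, div_self hR.ne', one_smul]
          have h2a : g d = l * a d := by rw [heq]; rfl
          have h2b : a d = R * a ((1/R) • d + 0) := by
            conv_lhs => rw [h1]
            rw [map_smul, smul_eq_mul]
          have hRad : 3*ε/8 ≤ R * a ((1/R) • d + 0) := by
            have h3 := mul_le_mul_of_nonneg_left had' hR.le
            calc 3*ε/8 = R * (3*ε/(8*R)) := by field_simp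
              _ ≤ R * a ((1/R) • d + 0) := h3
          calc η = (δ/5) * (3*ε/8) := by rw [hηdef]; ring
            _ ≤ l * (R * a ((1/R) • d + 0)) :=
                mul_le_mul hl5 hRad (by positivity) (le_trans (by positivity) hl5)
            _ = g d := by rw [h2a, h2b]
        rw [hge]
        have h6 : g x ≤ 1 := by
          have h1 := g.le_opNorm x
          rw [Real.norm_eq_abs, hx1, mul_one] at h1
          linarith [le_abs_self (g x)]
        nlinarith
    refine ⟨t • x, t - η, by linarith, le_trans (by linarith) (le_max_left _ _), ?_, ?_⟩
    · intro d hd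
      rw [mem_closedBall, dist_eq_norm, norm_sub_rev]
      exact hincl d hd
    · apply le_infDist_of ⟨t • x, mem_closedBall_self (by linarith)⟩
      intro y hy
      rw [mem_closedBall] at hy
      have h1 : ‖t • x‖ = t := by
        rw [norm_smul, Real.norm_eq_abs, abs_of_pos htpos, hx1, mul_one]
      have h2 : ‖t • x‖ - ‖y‖ ≤ ‖t • x - y‖ := by
        linarith [abs_le.1 (abs_norm_sub_norm_le (t • x) y)]
      have h3 : ‖t • x - y‖ = dist y (t • x) := by rw [dist_comm, dist_eq_norm]
      linarith

theorem stmt19 [CompleteSpace X] (𝒞 : Set (Set X)) (h𝒞 : IsCompatibleClass 𝒞) :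
    HasCUMIP 𝒞 ↔
      ∀ ε : ℝ, 0 < ε → ∃ δ : ℝ, 0 < δ ∧ ∀ C ∈ 𝒞, C ⊆ closedBall (0 : X) 1 →
        ∀ f : StrongDual ℝ X, ‖f‖ = 1 →
          ∃ x : X, ‖x‖ = 1 ∧ wslice x δ ⊆ coneOf (ballOn C f ε) :=
  ⟨fun h => dir_mp 𝒞 h𝒞 h, fun h => dir_mpr 𝒞 h𝒞 h⟩
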